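/- Let n ≥ 2, k ≥ 1, R ∈ (-1,1), and ψ a maximal solution of ψ'(r) = (1/(k(1-r²)))·(ψ(r)²+1)·((n-1)(r-R)·ψ(r) + √(1-r²)) on a subinterval of (-1,1). If there exists r₀ ∈ (R,1) with ψ(r₀) > 0, then there exists r₁ ∈ (r₀,1) such that ψ(r) → +∞ as r ↑ r₁. -/

import Mathlib

open Real Set Filter
open Topology

/-- Right-hand side of the first-order soliton ODE:
`ψ\x27(r) = (1/(k(1-r²)))·(ψ(r)²+1)·((n-1)(r-R)·ψ(r) + √(1-r²))`. -/
noncomputable def solitonRHS (n k : ℕ) (R y r : ℝ) : ℝ :=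
  (1 / ((k : ℝ) * (1 - r ^ 2))) * (y ^ 2 + 1) *
    (((n : ℝ) - 1) * (r - R) * y + Real.sqrt (1 - r ^ 2))

lemma contDiffAt_solitonRHS (n k : ℕ) (hk : 1 ≤ k) (R : ℝ) (p : ℝ × ℝ) (hp : p.1 ^ 2 < 1) :
    ContDiffAt ℝ 1 (fun q : ℝ × ℝ => solitonRHS n k R q.2 q.1) p := by
  have h1 : (1 : ℝ) - p.1 ^ 2 ≠ 0 := by nlinarith
  have hk0 : (k : ℝ) ≠ 0 := Nat.cast_ne_zero.mpr (by omega)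
  unfold solitonRHS
  refine ContDiffAt.mul (ContDiffAt.mul ?_ ?_) ?_
  · exact contDiffAt_const.div
      (contDiffAt_const.mul (contDiffAt_const.sub ((contDiffAt_fst).pow 2)))
      (by simp [h1, hk0])
  · exact ((contDiffAt_snd).pow 2).add contDiffAt_const
  · refine ContDiffAt.add ?_ ?_
    · exact (contDiffAt_const.mul ((contDiffAt_fst).sub contDiffAt_const)).mul contDiffAt_snd
    · exact (Real.contDiffAt_sqrt h1).comp p (contDiffAt_const.sub ((contDiffAt_fst).pow 2))

lemma solitonRHS_pos_at_zero (n k : ℕ) (hk : 1 ≤ k) (R t : ℝ) (ht : -1 < t) (ht' : t < 1) :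
    0 < solitonRHS n k R 0 t := by
  have h1 : (0 : ℝ) < 1 - t ^ 2 := by nlinarith
  have hk0 : (0 : ℝ) < (k : ℝ) := by exact_mod_cast Nat.pos_of_ne_zero (by omega)
  have hs : 0 < Real.sqrt (1 - t ^ 2) := Real.sqrt_pos.mpr h1
  unfold solitonRHS
  have : ((n:ℝ) - 1) * (t - R) * 0 = 0 := by ring
  rw [this]
  norm_num
  positivity

lemma psi_pos (n k : ℕ) (hk : 1 ≤ k) (R a b : ℝ) (hab : Ioo a b ⊆ Ioo (-1:ℝ) 1) (ψ : ℝ → ℝ)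
    (hψ : ∀ r ∈ Ioo a b, HasDerivAt ψ (solitonRHS n k R (ψ r) r) r)
    (r₀ : ℝ) (hr₀ : r₀ ∈ Ioo a b) (hpos : 0 < ψ r₀) :
    ∀ r ∈ Ico r₀ b, 0 < ψ r := by
  by_contra hcon
  push_neg at hcon
  obtain ⟨r₂, hr₂, hψr₂⟩ := hcon
  have hr₀r₂ : r₀ < r₂ := by
    rcases eq_or_lt_of_le hr₂.1 with h | h
    · exact absurd (h ▸ hψr₂) (not_le.mpr hpos)
    · exact h
  have hIcc_sub : Icc r₀ r₂ ⊆ Ioo a b := fun r hr =>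
    ⟨lt_of_lt_of_le hr₀.1 hr.1, lt_of_le_of_lt hr.2 hr₂.2⟩
  have hcont : ContinuousOn ψ (Icc r₀ r₂) := fun r hr =>
    (hψ r (hIcc_sub hr)).continuousAt.continuousWithinAt
  set S : Set ℝ := Icc r₀ r₂ ∩ ψ ⁻¹' (Iic 0) with hS
  have hScl : IsClosed S :=
    hcont.preimage_isClosed_of_isClosed isClosed_Icc isClosed_Iic
  have hSne : S.Nonempty := ⟨r₂, ⟨⟨le_of_lt hr₀r₂, le_refl _⟩, hψr₂⟩⟩
  have hSbd : BddBelow S := ⟨r₀, fun x hx => hx.1.1⟩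
  set t := sInf S with htdef
  have htS : t ∈ S := hScl.csInf_mem hSne hSbd
  have htmem : t ∈ Icc r₀ r₂ := htS.1
  have hψt : ψ t ≤ 0 := htS.2
  have hr₀t : r₀ < t := by
    rcases eq_or_lt_of_le htmem.1 with h | h
    · exact absurd (h ▸ hψt) (not_le.mpr hpos)
    · exact h
  have hlt : ∀ r ∈ Ico r₀ t, 0 < ψ r := by
    intro r hr
    by_contra hle
    push_neg at hle
    have : r ∈ S := ⟨⟨hr.1, le_trans (le_of_lt hr.2) htmem.2⟩, hle⟩
    exact absurd (csInf_le hSbd this) (not_le.mpr hr.2)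
  have htab : t ∈ Ioo a b := hIcc_sub htmem
  have hct : ContinuousAt ψ t := (hψ t htab).continuousAt
  have hψt0 : ψ t = 0 := by
    refine le_antisymm hψt ?_
    have h1 : Tendsto ψ (𝓝[<] t) (𝓝 (ψ t)) :=
      (hct.tendsto).mono_left nhdsWithin_le_nhds
    refine ge_of_tendsto h1 ?_
    filter_upwards [Ioo_mem_nhdsLT hr₀t] with x hx
    exact le_of_lt (hlt x ⟨le_of_lt hx.1, hx.2⟩)
  have hd : HasDerivAt ψ (solitonRHS n k R 0 t) t := hψt0 ▸ hψ t htab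
  have hdpos : 0 < solitonRHS n k R 0 t :=
    solitonRHS_pos_at_zero n k hk R t (hab htab).1 (hab htab).2
  rw [hasDerivAt_iff_tendsto_slope] at hd
  have hd' : Tendsto (slope ψ t) (𝓝[<] t) (𝓝 (solitonRHS n k R 0 t)) :=
    hd.mono_left (nhdsWithin_mono t (fun x hx => ne_of_lt hx))
  have hle : solitonRHS n k R 0 t ≤ 0 := by
    refine le_of_tendsto hd' ?_
    filter_upwards [Ioo_mem_nhdsLT hr₀t] with x hx
    rw [slope_def_field]
    have hnum : 0 ≤ ψ x := le_of_lt (hlt x ⟨le_of_lt hx.1, hx.2⟩)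
    have hden : x - t < 0 := by linarith [hx.2]
    rw [hψt0, sub_zero]
    exact div_nonpos_iff.mpr (Or.inl ⟨hnum, le_of_lt hden⟩)
  linarith

lemma solitonRHS_pos (n k : ℕ) (hn : 2 ≤ n) (hk : 1 ≤ k) (R t y : ℝ)
    (ht : -1 < t) (ht' : t < 1) (htR : R < t) (hy : 0 < y) :
    0 < solitonRHS n k R y t := by
  have h1 : (0 : ℝ) < 1 - t ^ 2 := by nlinarith
  have hk0 : (0 : ℝ) < (k : ℝ) := by exact_mod_cast Nat.pos_of_ne_zero (by omega)
  have hnn : (0 : ℝ) < (n : ℝ) - 1 := by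
    have : (2 : ℝ) ≤ (n : ℝ) := by exact_mod_cast hn
    linarith
  unfold solitonRHS
  refine mul_pos (mul_pos (by positivity) (by positivity)) ?_
  exact add_pos_of_pos_of_nonneg (mul_pos (mul_pos hnn (by linarith)) hy)
    (Real.sqrt_nonneg _)

lemma psi_mono (n k : ℕ) (hn : 2 ≤ n) (hk : 1 ≤ k) (R a b : ℝ)
    (hab : Ioo a b ⊆ Ioo (-1:ℝ) 1) (ψ : ℝ → ℝ)
    (hψ : ∀ r ∈ Ioo a b, HasDerivAt ψ (solitonRHS n k R (ψ r) r) r)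
    (r₀ : ℝ) (hr₀ : r₀ ∈ Ioo a b) (hr₀R : R < r₀) (hpos : 0 < ψ r₀) :
    StrictMonoOn ψ (Ico r₀ b) := by
  have hsub : Ico r₀ b ⊆ Ioo a b := fun r hr => ⟨lt_of_lt_of_le hr₀.1 hr.1, hr.2⟩
  have hposall := psi_pos n k hk R a b hab ψ hψ r₀ hr₀ hpos
  refine strictMonoOn_of_deriv_pos (convex_Ico r₀ b)
    (fun r hr => (hψ r (hsub hr)).continuousAt.continuousWithinAt) ?_
  intro r hr
  rw [interior_Ico] at hr
  have hrab : r ∈ Ioo a b := hsub ⟨le_of_lt hr.1, hr.2⟩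
  rw [(hψ r hrab).deriv]
  exact solitonRHS_pos n k hn hk R r (ψ r) (hab hrab).1 (hab hrab).2
    (lt_trans hr₀R hr.1) (hposall r ⟨le_of_lt hr.1, hr.2⟩)

lemma not_b_eq_one (n k : ℕ) (hn : 2 ≤ n) (hk : 1 ≤ k) (R a : ℝ)
    (hab : Ioo a 1 ⊆ Ioo (-1:ℝ) 1) (ψ : ℝ → ℝ)
    (hψ : ∀ r ∈ Ioo a 1, HasDerivAt ψ (solitonRHS n k R (ψ r) r) r)
    (r₀ : ℝ) (hr₀ : r₀ ∈ Ioo a 1) (hr₀R : R < r₀) (hpos : 0 < ψ r₀) : False := by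
  have hk0 : (0 : ℝ) < (k : ℝ) := by exact_mod_cast Nat.pos_of_ne_zero (by omega)
  have hnn : (0 : ℝ) < (n : ℝ) - 1 := by
    have : (2 : ℝ) ≤ (n : ℝ) := by exact_mod_cast hn
    linarith
  have hposall := psi_pos n k hk R a 1 hab ψ hψ r₀ hr₀ hpos
  set C₀ : ℝ := ((n : ℝ) - 1) * (r₀ - R) / (2 * k) with hC₀def
  have hC₀ : 0 < C₀ := by
    apply div_pos (mul_pos hnn (by linarith)) (by linarith)
  set g : ℝ → ℝ := fun r => -(2 * (ψ r) ^ 2)⁻¹ + C₀ * Real.log (1 - r) with hgdef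
  have hIco_sub : Ico r₀ 1 ⊆ Ioo a 1 := fun r hr => ⟨lt_of_lt_of_le hr₀.1 hr.1, hr.2⟩
  -- derivative of g
  have hg : ∀ r ∈ Ico r₀ 1, HasDerivAt g
      (solitonRHS n k R (ψ r) r / (ψ r) ^ 3 - C₀ / (1 - r)) r := by
    intro r hr
    have hrab : r ∈ Ioo a 1 := hIco_sub hr
    have hψr : 0 < ψ r := hposall r hr
    have h1r : (0:ℝ) < 1 - r := by linarith [hr.2]
    have hd := hψ r hrab
    have h2 : HasDerivAt (fun r => 2 * (ψ r) ^ 2)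
        (2 * ((2 : ℕ) * ψ r ^ 1 * solitonRHS n k R (ψ r) r)) r := (hd.pow 2).const_mul 2
    have hinv := (h2.inv (by positivity)).neg
    have hlog : HasDerivAt (fun r => Real.log (1 - r)) ((1 - r)⁻¹ * (-1)) r := by
      have hsub : HasDerivAt (fun x : ℝ => 1 - x) (-1) r := by
        simpa using (hasDerivAt_id r).const_sub 1
      exact (Real.hasDerivAt_log (ne_of_gt h1r)).comp r hsub
    have h6 := hinv.add (hlog.const_mul C₀)
    have heq : solitonRHS n k R (ψ r) r / (ψ r) ^ 3 - C₀ / (1 - r) =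
        -(-(2 * ((2:ℕ) * ψ r ^ 1 * solitonRHS n k R (ψ r) r)) / (2 * ψ r ^ 2) ^ 2) +
          C₀ * ((1 - r)⁻¹ * -1) := by
      field_simp
      ring
    rw [heq]
    exact h6
  have key : ∀ r ∈ Ioo r₀ 1, C₀ / (1 - r) ≤ solitonRHS n k R (ψ r) r / (ψ r) ^ 3 := by
    intro r hr
    have hrab : r ∈ Ioo a 1 := ⟨lt_trans hr₀.1 hr.1, hr.2⟩
    have hψr : 0 < ψ r := hposall r ⟨le_of_lt hr.1, hr.2⟩
    have h1r : (0:ℝ) < 1 - r := by linarith [hr.2]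
    have hm1 : (-1:ℝ) < r := (hab hrab).1
    have h1r2 : (0:ℝ) < 1 - r ^ 2 := by nlinarith
    have hsq : 0 ≤ Real.sqrt (1 - r ^ 2) := Real.sqrt_nonneg _
    have hk1r : (0:ℝ) < (k:ℝ) * (1 - r ^ 2) := by positivity
    have e1 : solitonRHS n k R (ψ r) r / ψ r ^ 3 =
        ((ψ r) ^ 2 + 1) * (((n:ℝ) - 1) * (r - R) * ψ r + Real.sqrt (1 - r ^ 2)) /
          (((k:ℝ) * (1 - r ^ 2)) * ψ r ^ 3) := by
      rw [eq_div_iff (ne_of_gt (mul_pos hk1r (pow_pos hψr 3)))]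
      unfold solitonRHS
      field_simp
    rw [e1, div_le_div_iff₀ h1r (mul_pos hk1r (pow_pos hψr 3))]
    have hC0eq : C₀ * ((k:ℝ) * (1 - r ^ 2) * ψ r ^ 3) =
        (((n:ℝ) - 1) * (r₀ - R)) * ((1 + r) * ψ r ^ 3) / 2 * (1 - r) := by
      rw [hC₀def]; field_simp; ring
    rw [hC0eq]
    refine mul_le_mul_of_nonneg_right ?_ h1r.le
    have h5 : (r₀ - R) * (1 + r) ≤ (r - R) * 2 := by nlinarith [hr.1]
    have h6 := mul_le_mul_of_nonneg_left h5
      (le_of_lt (mul_pos hnn (pow_pos hψr 3)))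
    nlinarith [mul_nonneg hsq (by positivity : (0:ℝ) ≤ ψ r ^ 2 + 1),
      mul_nonneg (mul_nonneg hnn.le (by linarith [hr.1] : (0:ℝ) ≤ r - R)) hψr.le, h6]
  have hmono : MonotoneOn g (Ico r₀ 1) := by
    refine monotoneOn_of_deriv_nonneg (convex_Ico r₀ 1)
      (fun r hr => (hg r hr).continuousAt.continuousWithinAt) ?_ ?_
    · intro r hr
      rw [interior_Ico] at hr
      exact (hg r (Ioo_subset_Ico_self hr)).differentiableAt.differentiableWithinAt
    · intro r hr
      rw [interior_Ico] at hr
      rw [(hg r (Ioo_subset_Ico_self hr)).deriv]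
      have := key r hr
      linarith
  -- contradiction
  set δ : ℝ := Real.exp (g r₀ / C₀) with hδdef
  have hδ : 0 < δ := Real.exp_pos _
  have hbound : ∀ r ∈ Ico r₀ 1, δ ≤ 1 - r := by
    intro r hr
    have h1 : g r₀ ≤ g r := hmono (left_mem_Ico.mpr hr₀.2) hr hr.1
    have hψr : 0 < ψ r := hposall r hr
    have h2 : g r ≤ C₀ * Real.log (1 - r) := by
      have hinvpos : 0 < (2 * (ψ r) ^ 2)⁻¹ := by positivity
      simp only [hgdef]
      linarith
    have h3 : g r₀ / C₀ ≤ Real.log (1 - r) := by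
      rw [div_le_iff₀ hC₀]
      calc g r₀ ≤ C₀ * Real.log (1 - r) := le_trans h1 h2
      _ = Real.log (1 - r) * C₀ := by ring
    have h1r : (0:ℝ) < 1 - r := by linarith [hr.2]
    calc δ = Real.exp (g r₀ / C₀) := rfl
    _ ≤ Real.exp (Real.log (1 - r)) := Real.exp_le_exp.mpr h3
    _ = 1 - r := Real.exp_log h1r
  have hr1 : max r₀ (1 - δ / 2) ∈ Ico r₀ 1 := by
    constructor
    · exact le_max_left _ _
    · exact max_lt hr₀.2 (by linarith)
  have := hbound _ hr1
  have h4 : 1 - δ / 2 ≤ max r₀ (1 - δ / 2) := le_max_right _ _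
  linarith

set_option maxHeartbeats 2000000 in
theorem stmt_3 (n k : ℕ) (hn : 2 ≤ n) (hk : 1 ≤ k) (R a b : ℝ)
    (hR : R ∈ Set.Ioo (-1 : ℝ) 1) (hab : Set.Ioo a b ⊆ Set.Ioo (-1 : ℝ) 1)
    (ψ : ℝ → ℝ) (hψ : ∀ r ∈ Set.Ioo a b, HasDerivAt ψ (solitonRHS n k R (ψ r) r) r)
    (hmax : ¬ ∃ (b' : ℝ) (φ : ℝ → ℝ), b < b' ∧ b' ≤ 1 ∧ Set.EqOn φ ψ (Set.Ioo a b) ∧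
      ∀ r ∈ Set.Ioo a b', HasDerivAt φ (solitonRHS n k R (φ r) r) r)
    (r₀ : ℝ) (hr₀ab : r₀ ∈ Set.Ioo a b) (hr₀R : r₀ ∈ Set.Ioo R 1) (hpos : 0 < ψ r₀) :
    ∃ r₁ ∈ Set.Ioo r₀ (1 : ℝ),
      Filter.Tendsto ψ (nhdsWithin r₁ (Set.Iio r₁)) Filter.atTop := by
  obtain ⟨har₀, hr₀b⟩ := hr₀ab
  have hRlt : R < r₀ := hr₀R.1
  have hr₀1 : r₀ < 1 := hr₀R.2
  have hr₀m1 : -1 < r₀ := (hab ⟨har₀, hr₀b⟩).1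
  have hb1 : b ≤ 1 := by
    by_contra hb
    push_neg at hb
    have hmem : (1 + b) / 2 ∈ Ioo a b := by
      constructor
      · have : (1:ℝ) < (1 + b) / 2 := by linarith
        linarith
      · linarith
    exact absurd ((hab hmem).2) (by push_neg; linarith)
  have hblt : b < 1 := by
    rcases lt_or_eq_of_le hb1 with h | h
    · exact h
    · subst h
      exact (not_b_eq_one n k hn hk R a hab ψ hψ r₀ ⟨har₀, hr₀b⟩ hRlt hpos).elim
  have hmono := psi_mono n k hn hk R a b hab ψ hψ r₀ ⟨har₀, hr₀b⟩ hRlt hpos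
  have hposall := psi_pos n k hk R a b hab ψ hψ r₀ ⟨har₀, hr₀b⟩ hpos
  by_cases hbdd : BddAbove (ψ '' Ioo r₀ b)
  · -- bounded: contradiction with maximality
    exfalso
    apply hmax
    have hmonoIoo : MonotoneOn ψ (Ioo r₀ b) :=
      (hmono.monotoneOn).mono Ioo_subset_Ico_self
    set L : ℝ := sSup (ψ '' Ioo r₀ b) with hLdef
    have hlim : Tendsto ψ (𝓝[<] b) (𝓝 L) :=
      MonotoneOn.tendsto_nhdsWithin_Ioo_left
        ⟨(r₀ + b) / 2, by constructor <;> linarith⟩ hmonoIoo hbdd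
    have hbm1 : -1 < b := lt_trans hr₀m1 hr₀b
    have hb2 : b ^ 2 < 1 := by nlinarith
    have hW : ContDiffAt ℝ 1 (fun q : ℝ × ℝ => solitonRHS n k R q.2 q.1) (b, L) :=
      contDiffAt_solitonRHS n k hk R (b, L) (by simpa using hb2)
    have hv : ContDiffAt ℝ 1
        (fun q : ℝ × ℝ => ((1 : ℝ), solitonRHS n k R q.2 q.1)) (b, L) :=
      contDiffAt_const.prodMk hW
    obtain ⟨ε, hε, Ac, Rc, Lc, Kc, hr0, hpl⟩ := IsPicardLindelof.of_contDiffAt_one hv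
    obtain ⟨α, hα0', hα⟩ := (hpl b).exists_eq_forall_mem_Icc_hasDerivWithinAt (Metric.mem_closedBall_self hr0.le)
    have hα0 : α b = (b, L) := hα0'
    have hbIcc : b ∈ Icc (b - ε) (b + ε) := ⟨by linarith, by linarith⟩
    -- the first coordinate of α is the identity
    have hα1 : ∀ t ∈ Icc (b - ε) (b + ε), (α t).1 = t := by
      have key : ∀ t ∈ Icc (b - ε) (b + ε),
          (fun s => (α s).1 - s) t = (fun s => (α s).1 - s) (b - ε) := by
        apply constant_of_has_deriv_right_zero
        · intro t ht
          exact (((ContinuousLinearMap.fst ℝ ℝ ℝ).hasFDerivAt.comp_hasDerivWithinAt t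
            (hα t ht)).sub (hasDerivAt_id t).hasDerivWithinAt).continuousWithinAt
        · intro t ht
          have h1 := ((ContinuousLinearMap.fst ℝ ℝ ℝ).hasFDerivAt.comp_hasDerivWithinAt t
            (hα t (Ico_subset_Icc_self ht))).sub (hasDerivAt_id t).hasDerivWithinAt
          have h2 : HasDerivWithinAt (fun s => (α s).1 - s) 0 (Icc (b - ε) (b + ε)) t := by
            exact h1.congr_deriv (by simp)
          exact h2.mono_of_mem_nhdsWithin (Icc_mem_nhdsGE_of_mem ht)
      intro t ht
      have h1 := key t ht
      have h2 := key b hbIcc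
      simp only [hα0] at h2
      simp only at h1
      linarith
    set β : ℝ → ℝ := fun s => (α s).2 with hβdef
    have hβb : β b = L := by simp [hβdef, hα0]
    have hβd : ∀ t ∈ Icc (b - ε) (b + ε),
        HasDerivWithinAt β (solitonRHS n k R (β t) t) (Icc (b - ε) (b + ε)) t := by
      intro t ht
      have h := (ContinuousLinearMap.snd ℝ ℝ ℝ).hasFDerivAt.comp_hasDerivWithinAt t (hα t ht)
      have h2 : HasDerivWithinAt β (solitonRHS n k R ((α t).2) ((α t).1))
          (Icc (b - ε) (b + ε)) t := h
      rwa [hα1 t ht] at h2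
    set b' : ℝ := min (b + ε) ((b + 1) / 2) with hb'def
    have hb'b : b < b' := lt_min (by linarith) (by linarith)
    have hb'le1 : b' ≤ 1 := le_trans (min_le_right _ _) (by linarith)
    set φ : ℝ → ℝ := fun r => if r < b then ψ r else β r with hφdef
    refine ⟨b', φ, hb'b, hb'le1, fun r hr => if_pos hr.2, ?_⟩
    intro r hr
    rcases lt_trichotomy r b with hlt | heq | hgt
    · have hfe : φ =ᶠ[𝓝 r] ψ := by
        filter_upwards [isOpen_Iio.mem_nhds hlt] with x hx
        exact if_pos hx
      have h := (hψ r ⟨hr.1, hlt⟩).congr_of_eventuallyEq hfe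
      have hφr : φ r = ψ r := if_pos hlt
      rw [hφr]
      exact h
    · subst heq
      have hφb : φ r = L := by
        rw [hφdef]
        simp only [lt_irrefl, if_false]
        exact hβb
      rw [hφb]
      have hIci : HasDerivWithinAt φ (solitonRHS n k R L r) (Ici r) r := by
        have h := (hβd r hbIcc).mono_of_mem_nhdsWithin
          (Icc_mem_nhdsGE_of_mem (⟨by linarith, by linarith⟩ : r ∈ Ico (r - ε) (r + ε)))
        rw [hβb] at h
        exact h.congr (fun x hx => if_neg (not_lt.mpr hx)) (if_neg (lt_irrefl r))
      have hIic : HasDerivWithinAt φ (solitonRHS n k R L r) (Iic r) r := by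
        apply hasDerivWithinAt_Iic_of_tendsto_deriv (s := Ioo r₀ r)
        · intro x hx
          have hfe : φ =ᶠ[𝓝 x] ψ := by
            filter_upwards [isOpen_Iio.mem_nhds hx.2] with y hy
            exact if_pos hy
          exact ((hψ x ⟨lt_trans har₀ hx.1, hx.2⟩).congr_of_eventuallyEq
            hfe).differentiableAt.differentiableWithinAt
        · have h1 : Tendsto ψ (𝓝[Ioo r₀ r] r) (𝓝 L) :=
            hlim.mono_left (nhdsWithin_mono r Ioo_subset_Iio_self)
          have h2 : ψ =ᶠ[𝓝[Ioo r₀ r] r] φ := by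
            filter_upwards [self_mem_nhdsWithin] with x hx
            exact (if_pos hx.2).symm
          have h3 : Tendsto φ (𝓝[Ioo r₀ r] r) (𝓝 L) := h1.congr' h2
          rw [ContinuousWithinAt, hφb]
          exact h3
        · exact Ioo_mem_nhdsLT hr₀b
        · have hcontG : ContinuousAt (fun q : ℝ × ℝ => solitonRHS n k R q.2 q.1) (r, L) :=
            hW.continuousAt
          have hid : Tendsto (fun x : ℝ => x) (𝓝[<] r) (𝓝 r) :=
            tendsto_id.mono_right nhdsWithin_le_nhds
          have h2 : Tendsto (fun x : ℝ => ((x : ℝ), ψ x)) (𝓝[<] r) (𝓝 (r, L)) :=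
            hid.prodMk_nhds hlim
          have hcomp : Tendsto (fun x => solitonRHS n k R (ψ x) x) (𝓝[<] r)
              (𝓝 (solitonRHS n k R L r)) := by
            have h3 := hcontG.tendsto.comp h2
            exact h3.congr fun x => rfl
          apply hcomp.congr'
          filter_upwards [Ioo_mem_nhdsLT hr₀b] with x hx
          have hfe : φ =ᶠ[𝓝 x] ψ := by
            filter_upwards [isOpen_Iio.mem_nhds hx.2] with y hy
            exact if_pos hy
          rw [hfe.deriv_eq, (hψ x ⟨lt_trans har₀ hx.1, hx.2⟩).deriv]
      have := hIic.union hIci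
      rw [Iic_union_Ici] at this
      exact hasDerivWithinAt_univ.mp this
    · have hr2 : r ∈ Ioo (b - ε) (b + ε) :=
        ⟨by linarith, lt_of_lt_of_le hr.2 (min_le_left _ _)⟩
      have h := (hβd r (Ioo_subset_Icc_self hr2)).hasDerivAt
        (Icc_mem_nhds hr2.1 hr2.2)
      have hfe : φ =ᶠ[𝓝 r] β := by
        filter_upwards [isOpen_Ioi.mem_nhds hgt] with x hx
        exact if_neg (not_lt.mpr (le_of_lt hx))
      have hφr : φ r = β r := if_neg (not_lt.mpr hgt.le)
      rw [hφr]
      exact h.congr_of_eventuallyEq hfe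
  · -- unbounded: blow up at b
    refine ⟨b, ⟨hr₀b, hblt⟩, ?_⟩
    rw [tendsto_atTop]
    intro M
    obtain ⟨y, hy, hMy⟩ := not_bddAbove_iff.mp hbdd M
    obtain ⟨r', hr', rfl⟩ := hy
    filter_upwards [Ioo_mem_nhdsLT hr'.2] with x hx
    have hle : ψ r' ≤ ψ x :=
      le_of_lt (hmono ⟨hr'.1.le, hr'.2⟩ ⟨le_trans hr'.1.le hx.1.le, hx.2⟩ hx.1)
    linarith
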